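/- If a family Φ of locally univalent holomorphic self-maps of a domain Ω ⊆ ℂ admits a Φ-universal function u in 𝓗_{l.u.}(Ω) (i.e., {u∘φ : φ ∈ Φ} is dense in the space of locally univalent holomorphic functions on Ω with the compact-open topology), then for every compact K ⊆ Ω there exists φ ∈ Φ with φ(K) ∩ K = ∅ and φ injective on K. -/

import Mathlib

/-- If a family Φ of locally univalent holomorphic self-maps of a domain Ω admits a
Φ-universal function u among locally univalent holomorphic functions on Ω, then for every
compact K ⊆ Ω there is φ ∈ Φ with φ(K) ∩ K = ∅ and φ injective on K. -/
theorem universal_implies_runaway (Ω : Set ℂ) (hΩ : IsOpen Ω) (hconn : IsConnected Ω)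
    (Φ : Set (ℂ → ℂ))
    (hΦ : ∀ φ ∈ Φ, DifferentiableOn ℂ φ Ω ∧ Set.MapsTo φ Ω Ω ∧ ∀ z ∈ Ω, deriv φ z ≠ 0)
    (u : ℂ → ℂ) (hu : DifferentiableOn ℂ u Ω) (hu' : ∀ z ∈ Ω, deriv u z ≠ 0)
    (huniv : ∀ f : ℂ → ℂ, DifferentiableOn ℂ f Ω → (∀ z ∈ Ω, deriv f z ≠ 0) →
      ∀ K : Set ℂ, K ⊆ Ω → IsCompact K → ∀ ε > (0:ℝ),
        ∃ φ ∈ Φ, ∀ z ∈ K, ‖u (φ z) - f z‖ < ε) :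
    ∀ K : Set ℂ, K ⊆ Ω → IsCompact K →
      ∃ φ ∈ Φ, (∀ z ∈ K, φ z ∉ K) ∧ Set.InjOn φ K := by
  intro K hKΩ hK
  -- a compact cthickening of K inside Ω
  obtain ⟨δ, hδ, hK₁Ω⟩ := hK.exists_cthickening_subset_open hΩ hKΩ
  set K₁ : Set ℂ := Metric.cthickening δ K with hK₁def
  have hK₁ : IsCompact K₁ := hK.cthickening
  have hKK₁ : K ⊆ K₁ := Metric.self_subset_cthickening K
  set ε : ℝ := δ / 8 with hεdef
  have hε : (0:ℝ) < ε := by positivity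
  -- bounds on K
  obtain ⟨M₁, hM₁⟩ := hK.exists_bound_of_continuousOn continuousOn_id
  obtain ⟨M₂, hM₂⟩ := hK.exists_bound_of_continuousOn (hu.continuousOn.mono hKΩ)
  set c : ℝ := M₁ + M₂ + ε with hcdef
  -- the target function f z = z + c
  have hfdiff : DifferentiableOn ℂ (fun z : ℂ => z + (c:ℂ)) Ω :=
    (differentiable_id.add_const _).differentiableOn
  have hfderiv : ∀ z ∈ Ω, deriv (fun z : ℂ => z + (c:ℂ)) z ≠ 0 := by
    intro z _
    have : deriv (fun z : ℂ => z + (c:ℂ)) z = 1 := by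
      rw [deriv_add_const]; exact deriv_id z
    rw [this]; exact one_ne_zero
  obtain ⟨φ, hφΦ, happrox⟩ := huniv _ hfdiff hfderiv K₁ hK₁Ω hK₁ ε hε
  obtain ⟨hφdiff, hφmaps, -⟩ := hΦ φ hφΦ
  -- the error function F
  set F : ℂ → ℂ := fun z => u (φ z) - (z + (c:ℂ)) with hFdef
  have hFΩ : DifferentiableOn ℂ F Ω :=
    (hu.comp hφdiff hφmaps).sub ((differentiable_id.add_const _).differentiableOn)
  have hFsmall : ∀ z ∈ K₁, ‖F z‖ < ε := fun z hz => happrox z hz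
  refine ⟨φ, hφΦ, ?_, ?_⟩
  · -- disjointness
    intro z hz hzK
    have h1 : ‖F z‖ < ε := hFsmall z (hKK₁ hz)
    have hz1 : ‖z‖ ≤ M₁ := hM₁ z hz
    have hz2 : ‖u (φ z)‖ ≤ M₂ := hM₂ (φ z) hzK
    have hz0 : (0:ℝ) ≤ ‖z‖ := norm_nonneg _
    have hc0 : (0:ℝ) ≤ c := by simp only [hcdef]; nlinarith [norm_nonneg (u (φ z))]
    have hcc : ‖(c:ℂ)‖ = c := by
      rw [Complex.norm_real, Real.norm_eq_abs, abs_of_nonneg hc0]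
    have h2 : c - ‖z‖ ≤ ‖z + (c:ℂ)‖ := by
      have he : ‖(c:ℂ)‖ = ‖(z + (c:ℂ)) - z‖ := by congr 1; ring
      have := norm_sub_le (z + (c:ℂ)) z
      rw [← he, hcc] at this
      linarith
    have h3 : ‖z + (c:ℂ)‖ - ‖u (φ z)‖ ≤ ‖F z‖ := by
      have he : z + (c:ℂ) = u (φ z) - F z := by simp only [hFdef]; ring
      have := norm_sub_le (u (φ z)) (F z)
      rw [← he] at this
      linarith
    simp only [hcdef] at h2
    linarith
  · -- injectivity
    intro z₁ hz₁ z₂ hz₂ heq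
    have hg : u (φ z₁) = u (φ z₂) := by rw [heq]
    have hFdiff12 : F z₁ - F z₂ = z₂ - z₁ := by
      simp only [hFdef, hg]; ring
    have hdist : ‖z₂ - z₁‖ < 2 * ε := by
      calc ‖z₂ - z₁‖ = ‖F z₁ - F z₂‖ := by rw [hFdiff12]
        _ ≤ ‖F z₁‖ + ‖F z₂‖ := norm_sub_le _ _
        _ < ε + ε := add_lt_add (hFsmall z₁ (hKK₁ hz₁)) (hFsmall z₂ (hKK₁ hz₂))
        _ = 2 * ε := by ring
    -- the small ball around z₁
    have hballsub : Metric.closedBall z₁ (δ/4) ⊆ Ω := by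
      intro x hx
      apply hK₁Ω
      exact Metric.mem_cthickening_of_dist_le x z₁ δ K hz₁
        (le_trans (Metric.mem_closedBall.mp hx) (by linarith))
    -- Cauchy estimate for deriv F on the small ball
    have hderivbound : ∀ x ∈ Metric.closedBall z₁ (δ/4), ‖deriv F x‖ ≤ 1/4 := by
      intro x hx
      have hxz₁ : dist x z₁ ≤ δ/4 := Metric.mem_closedBall.mp hx
      have hsub : Metric.closedBall x (δ/2) ⊆ K₁ := by
        intro y hy
        exact Metric.mem_cthickening_of_dist_le y z₁ δ K hz₁
          (le_trans (le_trans (dist_triangle y x z₁)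
            (add_le_add (Metric.mem_closedBall.mp hy) hxz₁)) (by linarith))
      have hdc : DiffContOnCl ℂ F (Metric.ball x (δ/2)) :=
        hFΩ.diffContOnCl_ball (hsub.trans hK₁Ω)
      have hbd : ∀ y ∈ Metric.sphere x (δ/2), ‖F y‖ ≤ ε := fun y hy =>
        (hFsmall y (hsub (Metric.sphere_subset_closedBall hy))).le
      have := Complex.norm_deriv_le_of_forall_mem_sphere_norm_le
        (by positivity : (0:ℝ) < δ/2) hdc hbd
      calc ‖deriv F x‖ ≤ ε / (δ/2) := this
        _ = 1/4 := by rw [hεdef]; field_simp; ring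
    have hFdiffAt : ∀ x ∈ Metric.closedBall z₁ (δ/4), DifferentiableAt ℂ F x :=
      fun x hx => hFΩ.differentiableAt (hΩ.mem_nhds (hballsub hx))
    have hz₂mem : z₂ ∈ Metric.closedBall z₁ (δ/4) := by
      rw [Metric.mem_closedBall, dist_eq_norm]
      have : (2:ℝ) * ε = δ/4 := by rw [hεdef]; ring
      linarith [hdist]
    have hmvt := (convex_closedBall z₁ (δ/4)).norm_image_sub_le_of_norm_deriv_le
      hFdiffAt hderivbound (Metric.mem_closedBall_self (by positivity)) hz₂mem
    -- ‖F z₂ - F z₁‖ ≤ 1/4 * ‖z₂ - z₁‖, but F z₂ - F z₁ = z₁ - z₂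
    have h4 : ‖z₂ - z₁‖ ≤ 1/4 * ‖z₂ - z₁‖ := by
      calc ‖z₂ - z₁‖ = ‖F z₁ - F z₂‖ := by rw [hFdiff12]
        _ = ‖F z₂ - F z₁‖ := norm_sub_rev _ _
        _ ≤ 1/4 * ‖z₂ - z₁‖ := hmvt
    have h5 : ‖z₂ - z₁‖ = 0 := by nlinarith [norm_nonneg (z₂ - z₁)]
    exact (sub_eq_zero.mp (norm_eq_zero.mp h5)).symm
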